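/- Let α > −1 be real and n ≥ 1 an integer, and let x_{n,1}(α) and x_{n,n}(α) denote respectively the largest and smallest zero of the generalized Laguerre polynomial L_n^{(α)}. Then x_{n,1}(α) − x_{n,n}(α) < 4√(n(n + α + 1)). -/

import Mathlib

/-- The generalized Laguerre polynomial `L_n^{(α)}`, as a function on `ℝ`, defined by
`L_n^{(α)}(x) = ∑_{i=0}^{n} (−1)^i · (∏_{j=i+1}^{n} (α + j)) / ((n − i)! · i!) · x^i`. -/
noncomputable def laguerre (n : ℕ) (α : ℝ) : ℝ → ℝ := fun x =>
  ∑ i ∈ Finset.range (n + 1),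
    (-1 : ℝ) ^ i * (∏ j ∈ Finset.Icc (i + 1) n, (α + (j : ℝ))) /
      (((n - i).factorial : ℝ) * ((i.factorial : ℝ))) * x ^ i

noncomputable def lcoef (n : ℕ) (α : ℝ) (i : ℕ) : ℝ :=
  (-1 : ℝ) ^ i * (∏ j ∈ Finset.Icc (i + 1) n, (α + (j : ℝ))) /
      (((n - i).factorial : ℝ) * ((i.factorial : ℝ)))

lemma laguerre_eq_sum (n : ℕ) (α x : ℝ) :
    laguerre n α x = ∑ i ∈ Finset.range (n + 1), lcoef n α i * x ^ i := rfl

lemma laguerre_eq_padded (n N : ℕ) (h : n < N) (α x : ℝ) :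
    laguerre n α x = ∑ i ∈ Finset.range N, (if i ≤ n then lcoef n α i else 0) * x ^ i := by
  rw [laguerre_eq_sum]
  rw [show (∑ i ∈ Finset.range (n+1), lcoef n α i * x ^ i)
      = ∑ i ∈ Finset.range (n+1), (if i ≤ n then lcoef n α i else 0) * x ^ i from
    Finset.sum_congr rfl (fun i hi => by
      rw [if_pos (Nat.lt_succ_iff.mp (Finset.mem_range.mp hi))])]
  exact Finset.sum_subset (Finset.range_subset_range.mpr h)
    (fun i _ hi => by
      rw [if_neg (by simpa [Nat.lt_succ_iff] using hi), zero_mul])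

lemma prod_bot (a b : ℕ) (h : a ≤ b) (f : ℕ → ℝ) :
    ∏ j ∈ Finset.Icc a b, f j = f a * ∏ j ∈ Finset.Icc (a+1) b, f j := by
  rw [← Finset.Ico_add_one_right_eq_Icc, Finset.prod_eq_prod_Ico_succ_bot (b := b + 1) (Nat.lt_succ_of_le h), Finset.Ico_add_one_right_eq_Icc]

lemma coef_mid (j d : ℕ) (α : ℝ) :
    ((j:ℝ)+1+d+2) * lcoef (j+1+d+2) α (j+1)
      = (2*((j:ℝ)+1+d)+α+3) * lcoef (j+1+d+1) α (j+1)
        - lcoef (j+1+d+1) α (j+1-1)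
        - ((j:ℝ)+1+d+1+α) * lcoef (j+1+d) α (j+1) := by
  have h1 : (j+1+d+2) - (j+1) = d+2 := by omega
  have h2 : (j+1+d+1) - (j+1) = d+1 := by omega
  have h3 : (j+1+d) - (j+1) = d := by omega
  have h4 : (j+1-1) = j := by omega
  have h5 : (j+1+d+1) - j = d+2 := by omega
  simp only [lcoef, h1, h2, h3, h4, h5]
  have p1 : ∏ j' ∈ Finset.Icc (j+1+1) (j+1+d+2), (α + (j':ℝ))
      = (∏ j' ∈ Finset.Icc (j+1+1) (j+1+d+1), (α + (j':ℝ))) * (α + ((j:ℝ)+1+d+2)) := by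
    rw [show j+1+d+2 = (j+1+d+1)+1 from rfl, Finset.prod_Icc_succ_top (by omega)]
    push_cast; ring
  have p2 : ∏ j' ∈ Finset.Icc (j+1+1) (j+1+d+1), (α + (j':ℝ))
      = (∏ j' ∈ Finset.Icc (j+1+1) (j+1+d), (α + (j':ℝ))) * (α + ((j:ℝ)+1+d+1)) := by
    rw [show j+1+d+1 = (j+1+d)+1 from rfl, Finset.prod_Icc_succ_top (by omega)]
    push_cast; ring
  have p3 : ∏ j' ∈ Finset.Icc (j+1) (j+1+d+1), (α + (j':ℝ))
      = (α + ((j:ℝ)+1)) * ∏ j' ∈ Finset.Icc (j+1+1) (j+1+d+1), (α + (j':ℝ)) := by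
    rw [prod_bot (j+1) (j+1+d+1) (by omega)]
    push_cast; ring
  rw [p1, p2, p3, p2]
  have f1 : ((d+2).factorial : ℝ) = (d+2)*(d+1)*(d.factorial) := by
    rw [Nat.factorial_succ, Nat.factorial_succ]; push_cast; ring
  have f2 : ((d+1).factorial : ℝ) = (d+1)*(d.factorial) := by
    rw [Nat.factorial_succ]; push_cast; ring
  have f3 : ((j+1).factorial : ℝ) = (j+1)*(j.factorial) := by
    rw [Nat.factorial_succ]; push_cast; ring
  rw [f1, f2, f3]
  have hd : (d.factorial : ℝ) ≠ 0 := by positivity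
  have hj : (j.factorial : ℝ) ≠ 0 := by positivity
  field_simp
  ring

lemma coef_zero (k : ℕ) (α : ℝ) :
    ((k:ℝ)+2) * lcoef (k+2) α 0
      = (2*(k:ℝ)+α+3) * lcoef (k+1) α 0 - ((k:ℝ)+1+α) * lcoef k α 0 := by
  simp only [lcoef, Nat.sub_zero, pow_zero, Nat.factorial_zero, zero_add]
  have p1 : ∏ j' ∈ Finset.Icc 1 (k+2), (α + (j':ℝ))
      = (∏ j' ∈ Finset.Icc 1 (k+1), (α + (j':ℝ))) * (α + ((k:ℝ)+2)) := by
    rw [Finset.prod_Icc_succ_top (by omega)]; push_cast; ring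
  have p2 : ∏ j' ∈ Finset.Icc 1 (k+1), (α + (j':ℝ))
      = (∏ j' ∈ Finset.Icc 1 k, (α + (j':ℝ))) * (α + ((k:ℝ)+1)) := by
    rw [Finset.prod_Icc_succ_top (by omega)]; push_cast; ring
  rw [p1, p2]
  have f1 : ((k+2).factorial : ℝ) = (k+2)*(k+1)*(k.factorial) := by
    rw [Nat.factorial_succ, Nat.factorial_succ]; push_cast; ring
  have f2 : ((k+1).factorial : ℝ) = (k+1)*(k.factorial) := by
    rw [Nat.factorial_succ]; push_cast; ring
  rw [f1, f2]
  have hk : (k.factorial : ℝ) ≠ 0 := by positivity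
  field_simp
  ring

lemma coef_top1 (k : ℕ) (α : ℝ) :
    ((k:ℝ)+2) * lcoef (k+2) α (k+1)
      = (2*(k:ℝ)+α+3) * lcoef (k+1) α (k+1) - lcoef (k+1) α k := by
  have h1 : (k+2) - (k+1) = 1 := by omega
  have h2 : (k+1) - (k+1) = 0 := by omega
  have h3 : (k+1) - k = 1 := by omega
  simp only [lcoef, h1, h2, h3, Nat.factorial_zero, Nat.factorial_one]
  rw [show Finset.Icc (k+1+1) (k+2) = {k+2} by rw [show k+1+1 = k+2 from rfl, Finset.Icc_self],
      show Finset.Icc (k+1+1) (k+1) = ∅ from Finset.Icc_eq_empty (by omega),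
      show Finset.Icc (k+1) (k+1) = {k+1} from Finset.Icc_self _]
  simp only [Finset.prod_singleton, Finset.prod_empty]
  have f2 : ((k+1).factorial : ℝ) = (k+1)*(k.factorial) := by
    rw [Nat.factorial_succ]; push_cast; ring
  rw [f2]
  have hk : (k.factorial : ℝ) ≠ 0 := by positivity
  field_simp
  push_cast
  ring

lemma coef_top2 (k : ℕ) (α : ℝ) :
    ((k:ℝ)+2) * lcoef (k+2) α (k+2) = - lcoef (k+1) α (k+1) := by
  have h1 : (k+2) - (k+2) = 0 := by omega
  have h2 : (k+1) - (k+1) = 0 := by omega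
  simp only [lcoef, h1, h2, Nat.factorial_zero]
  rw [show Finset.Icc (k+2+1) (k+2) = ∅ from Finset.Icc_eq_empty (by omega),
      show Finset.Icc (k+1+1) (k+1) = ∅ from Finset.Icc_eq_empty (by omega)]
  simp only [Finset.prod_empty]
  have f1 : ((k+2).factorial : ℝ) = (k+2)*((k+1).factorial) := by
    rw [Nat.factorial_succ]; push_cast; ring
  rw [f1]
  have hk : ((k+1).factorial : ℝ) ≠ 0 := by positivity
  field_simp
  ring

lemma lag_rec (k : ℕ) (α x : ℝ) :
    ((k:ℝ)+2) * laguerre (k+2) α x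
      = (2*(k:ℝ)+α+3 - x) * laguerre (k+1) α x - ((k:ℝ)+1+α) * laguerre k α x := by
  have hx : x * laguerre (k+1) α x
      = ∑ i ∈ Finset.range (k+3), (if 1 ≤ i then lcoef (k+1) α (i-1) else 0) * x ^ i := by
    rw [laguerre_eq_sum, Finset.mul_sum]
    conv_rhs => rw [Finset.sum_range_succ']
    simp only [Nat.add_sub_cancel]
    rw [if_neg (by omega : ¬ (1:ℕ) ≤ 0), zero_mul, add_zero]
    refine Finset.sum_congr rfl fun i _ => ?_
    rw [if_pos (by omega : 1 ≤ i + 1)]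
    ring
  have expand : (2*(k:ℝ)+α+3 - x) * laguerre (k+1) α x
      = (2*(k:ℝ)+α+3) * laguerre (k+1) α x - x * laguerre (k+1) α x := by ring
  rw [expand, hx, laguerre_eq_padded (k+1) (k+3) (by omega) α x,
    laguerre_eq_padded k (k+3) (by omega) α x, laguerre_eq_sum (k+2),
    Finset.mul_sum, Finset.mul_sum, Finset.mul_sum, ← Finset.sum_sub_distrib,
    ← Finset.sum_sub_distrib]
  refine Finset.sum_congr rfl fun i hi => ?_
  have hi3 : i < k + 3 := Finset.mem_range.mp hi
  have key : ((k:ℝ)+2) * lcoef (k+2) α i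
      = (2*(k:ℝ)+α+3) * (if i ≤ k+1 then lcoef (k+1) α i else 0)
        - (if 1 ≤ i then lcoef (k+1) α (i-1) else 0)
        - ((k:ℝ)+1+α) * (if i ≤ k then lcoef k α i else 0) := by
    rcases Nat.eq_zero_or_pos i with rfl | hip
    · rw [if_pos (by omega), if_neg (by omega), if_pos (by omega), sub_zero]
      exact coef_zero k α
    · rcases (by omega : i ≤ k ∨ i = k + 1 ∨ i = k + 2) with hik | rfl | rfl
      · obtain ⟨j, rfl⟩ : ∃ j, i = j + 1 := ⟨i - 1, by omega⟩
        obtain ⟨d, rfl⟩ : ∃ d, k = j + 1 + d := ⟨k - (j+1), by omega⟩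
        rw [if_pos (by omega), if_pos (by omega), if_pos (by omega)]
        have := coef_mid j d α
        push_cast at this ⊢
        linear_combination this
      · rw [if_pos (by omega), if_pos (by omega), if_neg (by omega)]
        simpa using coef_top1 k α
      · rw [if_neg (by omega), if_pos (by omega), if_neg (by omega)]
        simpa using coef_top2 k α
  calc ((k:ℝ)+2) * (lcoef (k+2) α i * x ^ i)
      = (((k:ℝ)+2) * lcoef (k+2) α i) * x ^ i := by ring
    _ = _ := by rw [key]; ring

lemma lag_zero (α x : ℝ) : laguerre 0 α x = 1 := by
  simp [laguerre]

lemma lag_one (α x : ℝ) : laguerre 1 α x = α + 1 - x := by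
  simp [laguerre, Finset.sum_range_succ]
  norm_num [Finset.Icc_self]
  ring

-- claim1 : for k ≤ n, (n-k) + √(k(k+α)) ≤ √(n(n+α+1))
lemma claim1 (n k : ℕ) (hk : k ≤ n) (α : ℝ) (hα : -1 < α) :
    ((n:ℝ) - k) + Real.sqrt (k*(k+α)) ≤ Real.sqrt (n*(n+α+1)) := by
  have hn0 : (0:ℝ) ≤ n := Nat.cast_nonneg n
  rcases Nat.eq_zero_or_pos k with rfl | hkp
  · simp only [Nat.cast_zero, zero_mul, Real.sqrt_zero, sub_zero, add_zero]
    calc (n:ℝ) = Real.sqrt ((n:ℝ)^2) := (Real.sqrt_sq hn0).symm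
      _ ≤ _ := Real.sqrt_le_sqrt (by nlinarith)
  have hk1 : (1:ℝ) ≤ k := by exact_mod_cast hkp
  have hkk : (0:ℝ) ≤ (k:ℝ)*((k:ℝ)+α) := by nlinarith
  have hs : Real.sqrt ((k:ℝ)*((k:ℝ)+α)) ≤ (k:ℝ) + α/2 := by
    rw [show (k:ℝ) + α/2 = Real.sqrt (((k:ℝ)+α/2)^2) from
      (Real.sqrt_sq (by linarith)).symm]
    exact Real.sqrt_le_sqrt (by nlinarith [sq_nonneg α])
  have hnk : (0:ℝ) ≤ (n:ℝ) - k := by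
    have : (k:ℝ) ≤ n := by exact_mod_cast hk
    linarith
  have h2 : (((n:ℝ) - k) + Real.sqrt (k*(k+α)))^2 ≤ (n:ℝ)*((n:ℝ)+α+1) := by
    have hsq : (Real.sqrt ((k:ℝ)*((k:ℝ)+α)))^2 = (k:ℝ)*((k:ℝ)+α) := Real.sq_sqrt hkk
    have hkn : (k:ℝ) ≤ n := by exact_mod_cast hk
    nlinarith [Real.sqrt_nonneg ((k:ℝ)*((k:ℝ)+α))]
  calc ((n:ℝ) - k) + Real.sqrt (k*(k+α))
      = Real.sqrt ((((n:ℝ) - k) + Real.sqrt (k*(k+α)))^2) :=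
        (Real.sqrt_sq (by positivity)).symm
    _ ≤ Real.sqrt ((n:ℝ)*((n:ℝ)+α+1)) := Real.sqrt_le_sqrt h2

lemma sqrt_prod_mono (α u v : ℝ) (hα : -1 < α) (hu : 1 ≤ u) (huv : u ≤ v) :
    Real.sqrt (u*(u+α)) ≤ Real.sqrt (v*(v+α)) :=
  Real.sqrt_le_sqrt (by nlinarith)

lemma lag_sign_upper (n : ℕ) (hn : 1 ≤ n) (α : ℝ) (hα : -1 < α) (x : ℝ)
    (hx : 2*(n:ℝ)+α-1 + Real.sqrt (((n:ℝ)-1)*((n:ℝ)-1+α))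
        + Real.sqrt ((n:ℝ)*((n:ℝ)+α)) ≤ x) :
    0 < (-1:ℝ)^n * laguerre n α x := by
  have hn1 : (1:ℝ) ≤ (n:ℝ) := by exact_mod_cast hn
  have hSA : (0:ℝ) ≤ Real.sqrt (((n:ℝ)-1)*((n:ℝ)-1+α)) := Real.sqrt_nonneg _
  have hSB1 : Real.sqrt (α+1) ≤ Real.sqrt ((n:ℝ)*((n:ℝ)+α)) := by
    apply Real.sqrt_le_sqrt; nlinarith
  have main : ∀ j, j + 1 ≤ n →
      0 < (-1:ℝ)^j * laguerre j α x ∧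
      Real.sqrt ((j:ℝ)+1+α) * ((-1:ℝ)^j * laguerre j α x)
        ≤ Real.sqrt ((j:ℝ)+1) * ((-1:ℝ)^(j+1) * laguerre (j+1) α x) := by
    intro j
    induction j with
    | zero =>
      intro _
      constructor
      · simp [lag_zero]
      · simp only [Nat.cast_zero, pow_zero, pow_one, zero_add, one_mul, lag_zero, lag_one,
          Real.sqrt_one, mul_one]
        have : Real.sqrt (α+1) + α + 1 ≤ x := by
          have h1 : Real.sqrt (α+1) ≤ Real.sqrt ((n:ℝ)*((n:ℝ)+α)) := hSB1
          linarith
        rw [show (1:ℝ)+α = α+1 by ring]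
        linarith
    | succ i ih =>
      intro hin
      obtain ⟨hri, hrat⟩ := ih (by omega)
      have hip1 : (0:ℝ) < (i:ℝ)+1 := by positivity
      have hip1a : (0:ℝ) < (i:ℝ)+1+α := by
        have : (0:ℝ) ≤ (i:ℝ) := Nat.cast_nonneg i
        linarith
      have hsq1 : (0:ℝ) < Real.sqrt ((i:ℝ)+1) := Real.sqrt_pos.mpr hip1
      have hsq1a : (0:ℝ) < Real.sqrt ((i:ℝ)+1+α) := Real.sqrt_pos.mpr hip1a
      -- r_{i+1} > 0
      have hr1 : 0 < (-1:ℝ)^(i+1) * laguerre (i+1) α x := by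
        have h1 : 0 < Real.sqrt ((i:ℝ)+1) * ((-1:ℝ)^(i+1) * laguerre (i+1) α x) :=
          lt_of_lt_of_le (mul_pos hsq1a hri) hrat
        nlinarith [hsq1]
      refine ⟨hr1, ?_⟩
      -- the ratio inequality for i+1
      have hcast : ((i:ℝ)+1)+1 = (i:ℝ)+2 := by ring
      have hi2 : (0:ℝ) < (i:ℝ)+2 := by positivity
      have hi2a : (0:ℝ) < (i:ℝ)+2+α := by
        have : (0:ℝ) ≤ (i:ℝ) := Nat.cast_nonneg i
        linarith
      have hs1 : Real.sqrt (((i:ℝ)+1)*((i:ℝ)+1+α))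
          = Real.sqrt ((i:ℝ)+1) * Real.sqrt ((i:ℝ)+1+α) :=
        Real.sqrt_mul (le_of_lt hip1) _
      have hs2 : Real.sqrt (((i:ℝ)+2)*((i:ℝ)+2+α))
          = Real.sqrt ((i:ℝ)+2) * Real.sqrt ((i:ℝ)+2+α) :=
        Real.sqrt_mul (le_of_lt hi2) _
      -- bound on x
      have hφ : 2*(i:ℝ)+α+3 + Real.sqrt (((i:ℝ)+1)*((i:ℝ)+1+α))
          + Real.sqrt (((i:ℝ)+2)*((i:ℝ)+2+α)) ≤ x := by
        have hin' : (i:ℝ)+2 ≤ (n:ℝ) := by exact_mod_cast hin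
        have m1 : Real.sqrt (((i:ℝ)+1)*((i:ℝ)+1+α))
            ≤ Real.sqrt (((n:ℝ)-1)*((n:ℝ)-1+α)) :=
          sqrt_prod_mono α _ _ hα (by linarith [Nat.cast_nonneg (α := ℝ) i]) (by linarith)
        have m2 : Real.sqrt (((i:ℝ)+2)*((i:ℝ)+2+α))
            ≤ Real.sqrt ((n:ℝ)*((n:ℝ)+α)) :=
          sqrt_prod_mono α _ _ hα (by linarith [Nat.cast_nonneg (α := ℝ) i]) (by linarith)
        linarith
      -- recurrence in r-form
      have hrec := lag_rec i α x
      have hrec' : ((i:ℝ)+2) * ((-1:ℝ)^(i+2) * laguerre (i+2) α x)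
          = (x - (2*(i:ℝ)+α+3)) * ((-1:ℝ)^(i+1) * laguerre (i+1) α x)
            - ((i:ℝ)+1+α) * ((-1:ℝ)^i * laguerre i α x) := by
        linear_combination ((-1:ℝ)^i) * hrec
      -- bound (i+1+α) r_i ≤ √(i+1)√(i+1+α) r_{i+1}
      have hb1 : ((i:ℝ)+1+α) * ((-1:ℝ)^i * laguerre i α x)
          ≤ Real.sqrt ((i:ℝ)+1) * Real.sqrt ((i:ℝ)+1+α)
              * ((-1:ℝ)^(i+1) * laguerre (i+1) α x) := by
        have e : Real.sqrt ((i:ℝ)+1+α) * Real.sqrt ((i:ℝ)+1+α) = (i:ℝ)+1+α :=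
          Real.mul_self_sqrt (le_of_lt hip1a)
        calc ((i:ℝ)+1+α) * ((-1:ℝ)^i * laguerre i α x)
            = Real.sqrt ((i:ℝ)+1+α)
              * (Real.sqrt ((i:ℝ)+1+α) * ((-1:ℝ)^i * laguerre i α x)) := by
              linear_combination (-((-1:ℝ)^i * laguerre i α x)) * e
          _ ≤ Real.sqrt ((i:ℝ)+1+α)
              * (Real.sqrt ((i:ℝ)+1) * ((-1:ℝ)^(i+1) * laguerre (i+1) α x)) :=
              mul_le_mul_of_nonneg_left hrat (Real.sqrt_nonneg _)
          _ = _ := by ring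
      -- (i+2) r_{i+2} ≥ √(i+2)√(i+2+α) r_{i+1}
      have hr2 : Real.sqrt ((i:ℝ)+2) * Real.sqrt ((i:ℝ)+2+α)
            * ((-1:ℝ)^(i+1) * laguerre (i+1) α x)
          ≤ ((i:ℝ)+2) * ((-1:ℝ)^(i+2) * laguerre (i+2) α x) := by
        rw [hrec']
        have hx1 : (2*(i:ℝ)+α+3 + Real.sqrt (((i:ℝ)+1)*((i:ℝ)+1+α))
              + Real.sqrt (((i:ℝ)+2)*((i:ℝ)+2+α))) * ((-1:ℝ)^(i+1) * laguerre (i+1) α x)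
            ≤ x * ((-1:ℝ)^(i+1) * laguerre (i+1) α x) :=
          mul_le_mul_of_nonneg_right hφ (le_of_lt hr1)
        rw [hs1, hs2] at hx1
        linarith [hb1]
      -- conclude
      have goal' : Real.sqrt ((i:ℝ)+2)
            * (Real.sqrt ((i:ℝ)+2+α) * ((-1:ℝ)^(i+1) * laguerre (i+1) α x))
          ≤ Real.sqrt ((i:ℝ)+2)
            * (Real.sqrt ((i:ℝ)+2) * ((-1:ℝ)^(i+2) * laguerre (i+2) α x)) := by
        have e2 : Real.sqrt ((i:ℝ)+2) * Real.sqrt ((i:ℝ)+2) = (i:ℝ)+2 :=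
          Real.mul_self_sqrt (le_of_lt hi2)
        calc Real.sqrt ((i:ℝ)+2)
              * (Real.sqrt ((i:ℝ)+2+α) * ((-1:ℝ)^(i+1) * laguerre (i+1) α x))
            = Real.sqrt ((i:ℝ)+2) * Real.sqrt ((i:ℝ)+2+α)
              * ((-1:ℝ)^(i+1) * laguerre (i+1) α x) := by ring
          _ ≤ ((i:ℝ)+2) * ((-1:ℝ)^(i+2) * laguerre (i+2) α x) := hr2
          _ = _ := by
              linear_combination (-((-1:ℝ)^(i+2) * laguerre (i+2) α x)) * e2
      have goalfinal := le_of_mul_le_mul_left goal' (Real.sqrt_pos.mpr hi2)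
      push_cast
      rw [show ((i:ℝ)+1)+1+α = (i:ℝ)+2+α by ring, show ((i:ℝ)+1)+1 = (i:ℝ)+2 by ring]
      exact goalfinal
  -- finish
  obtain ⟨j, rfl⟩ : ∃ j, n = j + 1 := ⟨n - 1, by omega⟩
  obtain ⟨hrj, hratj⟩ := main j le_rfl
  have hj1a : (0:ℝ) < (j:ℝ)+1+α := by
    have : (0:ℝ) ≤ (j:ℝ) := Nat.cast_nonneg j
    linarith
  have h1 : 0 < Real.sqrt ((j:ℝ)+1) * ((-1:ℝ)^(j+1) * laguerre (j+1) α x) :=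
    lt_of_lt_of_le (mul_pos (Real.sqrt_pos.mpr hj1a) hrj) hratj
  nlinarith [h1, Real.sqrt_nonneg ((j:ℝ)+1)]

lemma lag_sign_lower (n : ℕ) (hn : 1 ≤ n) (α : ℝ) (hα : -1 < α) (x : ℝ)
    (hx : x ≤ 2*(n:ℝ)+α-1 + Real.sqrt (((n:ℝ)-1)*((n:ℝ)-1+α))
        + Real.sqrt ((n:ℝ)*((n:ℝ)+α)) - 4 * Real.sqrt ((n:ℝ)*((n:ℝ)+α+1))) :
    0 < laguerre n α x := by
  have hn1 : (1:ℝ) ≤ (n:ℝ) := by exact_mod_cast hn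
  have c1 : 1 + Real.sqrt (((n:ℝ)-1)*((n:ℝ)-1+α)) ≤ Real.sqrt ((n:ℝ)*((n:ℝ)+α+1)) := by
    have := claim1 n (n-1) (by omega) α hα
    rw [Nat.cast_sub hn] at this
    push_cast at this
    calc 1 + Real.sqrt (((n:ℝ)-1)*((n:ℝ)-1+α))
        = ((n:ℝ) - ((n:ℝ)-1)) + Real.sqrt (((n:ℝ)-1)*((n:ℝ)-1+α)) := by ring_nf
      _ ≤ _ := this
  have c2 : Real.sqrt ((n:ℝ)*((n:ℝ)+α)) ≤ Real.sqrt ((n:ℝ)*((n:ℝ)+α+1)) := by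
    have := claim1 n n le_rfl α hα
    linarith [this]
  have c3 : ((n:ℝ)-1) + Real.sqrt (α+1) ≤ Real.sqrt ((n:ℝ)*((n:ℝ)+α+1)) := by
    have := claim1 n 1 hn α hα
    rw [show ((1:ℕ):ℝ) = (1:ℝ) by norm_num] at this
    rw [show (1:ℝ)*(1+α) = α+1 by ring] at this
    linarith [this]
  have hsnn : (0:ℝ) ≤ Real.sqrt ((n:ℝ)*((n:ℝ)+α+1)) := Real.sqrt_nonneg _
  have main : ∀ j, j + 1 ≤ n →
      0 < laguerre j α x ∧
      Real.sqrt ((j:ℝ)+1+α) * laguerre j α x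
        ≤ Real.sqrt ((j:ℝ)+1) * laguerre (j+1) α x := by
    intro j
    induction j with
    | zero =>
      intro _
      constructor
      · simp [lag_zero]
      · simp only [Nat.cast_zero, zero_add, lag_zero, lag_one, Real.sqrt_one, mul_one, one_mul]
        have hbase : x ≤ α + 1 - Real.sqrt (α+1) := by
          have := Real.sqrt_nonneg (α+1)
          linarith [c1, c2, c3, hx]
        rw [show (1:ℝ)+α = α+1 by ring]
        linarith
    | succ i ih =>
      intro hin
      obtain ⟨hri, hrat⟩ := ih (by omega)
      have hip1 : (0:ℝ) < (i:ℝ)+1 := by positivity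
      have hip1a : (0:ℝ) < (i:ℝ)+1+α := by
        have : (0:ℝ) ≤ (i:ℝ) := Nat.cast_nonneg i
        linarith
      have hsq1 : (0:ℝ) < Real.sqrt ((i:ℝ)+1) := Real.sqrt_pos.mpr hip1
      have hsq1a : (0:ℝ) < Real.sqrt ((i:ℝ)+1+α) := Real.sqrt_pos.mpr hip1a
      have hr1 : 0 < laguerre (i+1) α x := by
        have h1 : 0 < Real.sqrt ((i:ℝ)+1) * laguerre (i+1) α x :=
          lt_of_lt_of_le (mul_pos hsq1a hri) hrat
        nlinarith [h1, Real.sqrt_nonneg ((i:ℝ)+1)]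
      refine ⟨hr1, ?_⟩
      have hi2 : (0:ℝ) < (i:ℝ)+2 := by positivity
      have hi2a : (0:ℝ) < (i:ℝ)+2+α := by
        have : (0:ℝ) ≤ (i:ℝ) := Nat.cast_nonneg i
        linarith
      have hs1 : Real.sqrt (((i:ℝ)+1)*((i:ℝ)+1+α))
          = Real.sqrt ((i:ℝ)+1) * Real.sqrt ((i:ℝ)+1+α) :=
        Real.sqrt_mul (le_of_lt hip1) _
      have hs2 : Real.sqrt (((i:ℝ)+2)*((i:ℝ)+2+α))
          = Real.sqrt ((i:ℝ)+2) * Real.sqrt ((i:ℝ)+2+α) :=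
        Real.sqrt_mul (le_of_lt hi2) _
      have hφ : x ≤ 2*(i:ℝ)+α+3 - Real.sqrt (((i:ℝ)+1)*((i:ℝ)+1+α))
          - Real.sqrt (((i:ℝ)+2)*((i:ℝ)+2+α)) := by
        have d1 := claim1 n (i+1) (by omega) α hα
        have d2 := claim1 n (i+2) (by omega) α hα
        push_cast at d1 d2
        linarith [c1, c2, d1, d2, hx]
      have hrec := lag_rec i α x
      have hb1 : ((i:ℝ)+1+α) * laguerre i α x
          ≤ Real.sqrt ((i:ℝ)+1) * Real.sqrt ((i:ℝ)+1+α) * laguerre (i+1) α x := by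
        have e : Real.sqrt ((i:ℝ)+1+α) * Real.sqrt ((i:ℝ)+1+α) = (i:ℝ)+1+α :=
          Real.mul_self_sqrt (le_of_lt hip1a)
        calc ((i:ℝ)+1+α) * laguerre i α x
            = Real.sqrt ((i:ℝ)+1+α) * (Real.sqrt ((i:ℝ)+1+α) * laguerre i α x) := by
              linear_combination (-(laguerre i α x)) * e
          _ ≤ Real.sqrt ((i:ℝ)+1+α) * (Real.sqrt ((i:ℝ)+1) * laguerre (i+1) α x) :=
              mul_le_mul_of_nonneg_left hrat (Real.sqrt_nonneg _)
          _ = _ := by ring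
      have hr2 : Real.sqrt ((i:ℝ)+2) * Real.sqrt ((i:ℝ)+2+α) * laguerre (i+1) α x
          ≤ ((i:ℝ)+2) * laguerre (i+2) α x := by
        rw [hrec]
        have hx1 : x * laguerre (i+1) α x
            ≤ (2*(i:ℝ)+α+3 - Real.sqrt (((i:ℝ)+1)*((i:ℝ)+1+α))
              - Real.sqrt (((i:ℝ)+2)*((i:ℝ)+2+α))) * laguerre (i+1) α x :=
          mul_le_mul_of_nonneg_right hφ (le_of_lt hr1)
        rw [hs1, hs2] at hx1
        nlinarith [hb1, hx1]
      have goal' : Real.sqrt ((i:ℝ)+2) * (Real.sqrt ((i:ℝ)+2+α) * laguerre (i+1) α x)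
          ≤ Real.sqrt ((i:ℝ)+2) * (Real.sqrt ((i:ℝ)+2) * laguerre (i+2) α x) := by
        have e2 : Real.sqrt ((i:ℝ)+2) * Real.sqrt ((i:ℝ)+2) = (i:ℝ)+2 :=
          Real.mul_self_sqrt (le_of_lt hi2)
        calc Real.sqrt ((i:ℝ)+2) * (Real.sqrt ((i:ℝ)+2+α) * laguerre (i+1) α x)
            = Real.sqrt ((i:ℝ)+2) * Real.sqrt ((i:ℝ)+2+α) * laguerre (i+1) α x := by ring
          _ ≤ ((i:ℝ)+2) * laguerre (i+2) α x := hr2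
          _ = _ := by linear_combination (-(laguerre (i+2) α x)) * e2
      have goalfinal := le_of_mul_le_mul_left goal' (Real.sqrt_pos.mpr hi2)
      push_cast
      rw [show ((i:ℝ)+1)+1+α = (i:ℝ)+2+α by ring, show ((i:ℝ)+1)+1 = (i:ℝ)+2 by ring]
      exact goalfinal
  obtain ⟨j, rfl⟩ : ∃ j, n = j + 1 := ⟨n - 1, by omega⟩
  obtain ⟨hrj, hratj⟩ := main j le_rfl
  have hj1a : (0:ℝ) < (j:ℝ)+1+α := by
    have : (0:ℝ) ≤ (j:ℝ) := Nat.cast_nonneg j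
    linarith
  have h1 : 0 < Real.sqrt ((j:ℝ)+1) * laguerre (j+1) α x :=
    lt_of_lt_of_le (mul_pos (Real.sqrt_pos.mpr hj1a) hrj) hratj
  nlinarith [h1, Real.sqrt_nonneg ((j:ℝ)+1)]

/-- Let `α > −1`, `n ≥ 1`, and let `x_{n,1}(α)` and `x_{n,n}(α)` denote respectively the
largest and smallest zero of `L_n^{(α)}` (here `x k = x_{n,k}(α)`, listed in decreasing
order).  Then `x_{n,1}(α) − x_{n,n}(α) < 4√(n(n + α + 1))`. -/
theorem laguerre_zeros_range (n : ℕ) (hn : 1 ≤ n) (α : ℝ) (hα : -1 < α)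
    (x : ℕ → ℝ)
    (hzero : ∀ i ∈ Finset.Icc 1 n, laguerre n α (x i) = 0)
    (hanti : ∀ i ∈ Finset.Icc 1 n, ∀ j ∈ Finset.Icc 1 n, i < j → x j < x i)
    (hall : ∀ y : ℝ, laguerre n α y = 0 → ∃ i ∈ Finset.Icc 1 n, y = x i) :
    x 1 - x n < 4 * Real.sqrt (n * (n + α + 1)) := by
  have h1n : (1:ℕ) ∈ Finset.Icc 1 n := Finset.mem_Icc.mpr ⟨le_rfl, hn⟩
  have hnn : n ∈ Finset.Icc 1 n := Finset.mem_Icc.mpr ⟨hn, le_rfl⟩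
  have hz1 := hzero 1 h1n
  have hzn := hzero n hnn
  have hx1 : x 1 < 2*(n:ℝ)+α-1 + Real.sqrt (((n:ℝ)-1)*((n:ℝ)-1+α))
      + Real.sqrt ((n:ℝ)*((n:ℝ)+α)) := by
    by_contra h
    push_neg at h
    have h2 := lag_sign_upper n hn α hα (x 1) h
    rw [hz1] at h2
    simp at h2
  have hxn : 2*(n:ℝ)+α-1 + Real.sqrt (((n:ℝ)-1)*((n:ℝ)-1+α))
      + Real.sqrt ((n:ℝ)*((n:ℝ)+α)) - 4 * Real.sqrt ((n:ℝ)*((n:ℝ)+α+1)) < x n := by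
    by_contra h
    push_neg at h
    have h2 := lag_sign_lower n hn α hα (x n) h
    rw [hzn] at h2
    exact lt_irrefl 0 h2
  linarith
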